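/- Let n ≥ 6, r ≥ 0, and k ≥ 2 with k ≠ n-4 and 2 ≤ k ≤ r+n-4. Then HS_k(I(CH_{n,r}^c)) has linear quotients with respect to the lexicographic order induced by x_1 > x_2 > ··· > x_{r+n}. -/

import Mathlib

open Finset

/-- Edge relation of the graph `Hₙ` (one orientation). -/
def HE (n a b : ℕ) : Prop :=
  (1 ≤ a ∧ a ≤ n - 5 ∧ b = a + 1) ∨
  (a = n - 4 ∧ b = n - 2) ∨ (a = n - 2 ∧ b = n - 3) ∨
  (a = n - 1 ∧ 2 ≤ b ∧ b ≤ n ∧ b ≠ n - 1) ∨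
  (a = n ∧ 1 ≤ b ∧ b ≤ n ∧ b ≠ n - 3 ∧ b ≠ n)

/-- Edge relation of the graph `Hₙ` (symmetrized). -/
def Hedge (n a b : ℕ) : Prop := HE n a b ∨ HE n b a

def LHE (n r a b : ℕ) : Prop :=
  (n + 1 ≤ a ∧ a ≤ n + r ∧ 1 ≤ b ∧ b ≤ n ∧ b ≠ n - 3) ∨
  (n + 1 ≤ a ∧ a ≤ n + r ∧ n + 1 ≤ b ∧ b ≤ n + r ∧ a ≠ b)

/-- Edge relation of `LH_{n,r}`. -/
def LHedge (n r a b : ℕ) : Prop := Hedge n a b ∨ LHE n r a b ∨ LHE n r b a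

/-- Edge relation of `CH_{n,r}`: a shifted copy of `Hₙ` on `{r+1,…,r+n}`,
a clique on `{1,…,r}`, each clique vertex joined to `x_{r+n-1}` and `x_{r+n}`. -/
def CHedge (n r a b : ℕ) : Prop :=
  (r < a ∧ r < b ∧ Hedge n (a - r) (b - r)) ∨
  (1 ≤ a ∧ a ≤ r ∧ 1 ≤ b ∧ b ≤ r ∧ a ≠ b) ∨
  (1 ≤ a ∧ a ≤ r ∧ (b = r + n - 1 ∨ b = r + n)) ∨
  (1 ≤ b ∧ b ≤ r ∧ (a = r + n - 1 ∨ a = r + n))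

/-- Edge relation of `ACH_{n,r}`: `CH_{n,r}` plus edges from `{1,…,r}` to `x_{r+n-2}`. -/
def ACHedge (n r a b : ℕ) : Prop :=
  CHedge n r a b ∨ (1 ≤ a ∧ a ≤ r ∧ b = r + n - 2) ∨ (1 ≤ b ∧ b ≤ r ∧ a = r + n - 2)

/-- Minimal generators (as squarefree supports) of the `k`-th homological shift ideal
`HS_k(I(G^c))` of the edge ideal of the complement of a graph `G` with edge relation `E`
on vertex set `V`, whose natural order is a perfect elimination ordering
(Herzog–Moradi–Rahimbeigi–Zhu description). -/
def hsGens (E : ℕ → ℕ → Prop) (V : Finset ℕ) (k : ℕ) : Set (Finset ℕ) :=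
  {h | h ⊆ V ∧ h.card = k + 2 ∧
    ∃ t ∈ h, (∃ l ∈ h, t < l) ∧ ∀ l ∈ h, t < l → ¬ E t l}

/-- The successive-colon (linear quotients) condition for a given ordering of the
minimal generators of a squarefree monomial ideal generated in one degree. -/
def LQList (L : List (Finset ℕ)) : Prop :=
  ∀ i j : Fin L.length, i < j →
    ∃ p : Fin L.length, p < j ∧ ∃ v : ℕ,
      L.get p \ L.get j = {v} ∧ v ∈ L.get i \ L.get j

/-- A finite set of squarefree monomials (generators of an equigenerated monomial ideal)
has linear quotients: some linear order of the generators works. -/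
def HasLQ (S : Set (Finset ℕ)) : Prop :=
  ∃ L : List (Finset ℕ), L.Nodup ∧ (∀ h, h ∈ L ↔ h ∈ S) ∧ LQList L

/-- `g >_lex f` for squarefree monomials with variable order `x₁ > x₂ > ⋯`. -/
def lexGt (g f : Finset ℕ) : Prop :=
  List.Lex (· < ·) (g.sort (· ≤ ·)) (f.sort (· ≤ ·))

def fmax (h : Finset ℕ) : ℕ := h.sup id
noncomputable def fmin (h : Finset ℕ) : ℕ := sInf (↑h : Set ℕ)
def smax (h : Finset ℕ) : ℕ := (h.erase (fmax h)).sup id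

/-- The natural order on vertices is a perfect elimination ordering. -/
def IsPEO (E : ℕ → ℕ → Prop) (V : Finset ℕ) : Prop :=
  ∀ i ∈ V, ∀ j ∈ V, ∀ l ∈ V, i < j → i < l → j ≠ l → E i j → E i l → E j l

/-- A graph on `V` is chordal iff some relabeling of the vertices is a perfect
elimination ordering. -/
def ChordalOn (E : ℕ → ℕ → Prop) (V : Finset ℕ) : Prop :=
  ∃ π : ℕ → ℕ, Set.BijOn π ↑V ↑V ∧ IsPEO (fun a b => E (π a) (π b)) V


lemma lex_asymm : ∀ (l₁ l₂ : List ℕ), List.Lex (· < ·) l₁ l₂ → List.Lex (· < ·) l₂ l₁ → False := by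
  intro l₁
  induction l₁ with
  | nil => intro l₂ h₁ h₂; cases h₁ <;> cases h₂
  | cons a t ih =>
    intro l₂ h₁ h₂
    cases h₁ with
    | rel h => cases h₂ with
      | rel h' => omega
      | cons h' => omega
    | cons h => cases h₂ with
      | rel h' => omega
      | cons h' => exact ih _ h h'

lemma lex_of_agree : ∀ (l₁ l₂ : List ℕ), l₁.Pairwise (· < ·) → l₂.Pairwise (· < ·) →
    l₁.length ≤ l₂.length → ∀ v, v ∈ l₁ → v ∉ l₂ →
    (∀ x, x < v → (x ∈ l₁ ↔ x ∈ l₂)) → List.Lex (· < ·) l₁ l₂ := by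
  intro l₁
  induction l₁ with
  | nil => intro l₂ _ _ _ v hv; simp at hv
  | cons a t₁ ih =>
    intro l₂ hs₁ hs₂ hlen v hv hv₂ agree
    match l₂ with
    | [] => simp at hlen
    | b :: t₂ =>
      rcases lt_trichotomy a b with hab | hab | hab
      · exact List.Lex.rel hab
      · subst hab
        have hva : v ≠ a := by rintro rfl; exact hv₂ (by simp)
        have hvt : v ∈ t₁ := by
          rcases List.mem_cons.1 hv with h | h
          · omega
          · exact h
        apply List.Lex.cons
        apply ih t₂ hs₁.of_cons hs₂.of_cons (by simpa using hlen) v hvt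
        · intro h; exact hv₂ (List.mem_cons_of_mem _ h)
        · intro x hx
          have h1 := agree x hx
          have ha₁ : ∀ y ∈ t₁, a < y := (List.pairwise_cons.1 hs₁).1
          have ha₂ : ∀ y ∈ t₂, a < y := (List.pairwise_cons.1 hs₂).1
          constructor
          · intro hxt
            rcases List.mem_cons.1 (h1.1 (List.mem_cons_of_mem _ hxt)) with h | h
            · exact absurd (ha₁ x hxt) (by omega)
            · exact h
          · intro hxt
            rcases List.mem_cons.1 (h1.2 (List.mem_cons_of_mem _ hxt)) with h | h
            · exact absurd (ha₂ x hxt) (by omega)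
            · exact h
      · -- b < a : contradiction
        exfalso
        have hav : a ≤ v := by
          rcases List.mem_cons.1 hv with h | h
          · omega
          · exact le_of_lt ((List.pairwise_cons.1 hs₁).1 v h)
        have hb₁ : b ∈ List.cons a t₁ := (agree b (by omega)).2 (by simp)
        rcases List.mem_cons.1 hb₁ with h | h
        · omega
        · exact absurd ((List.pairwise_cons.1 hs₁).1 b h) (by omega)

lemma exists_of_lex : ∀ (l₁ l₂ : List ℕ), List.Lex (· < ·) l₁ l₂ →
    l₁.Pairwise (· < ·) → l₂.Pairwise (· < ·) → l₂.length ≤ l₁.length →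
    ∃ v, v ∈ l₁ ∧ v ∉ l₂ ∧ ∀ x, x < v → (x ∈ l₁ ↔ x ∈ l₂) := by
  intro l₁
  induction l₁ with
  | nil => intro l₂ h _ _ hlen; cases h; simp at hlen
  | cons a t₁ ih =>
    intro l₂ h hs₁ hs₂ hlen
    match l₂, h with
    | b :: t₂, h =>
      cases h with
      | rel hab =>
        refine ⟨a, by simp, ?_, ?_⟩
        · intro hmem
          rcases List.mem_cons.1 hmem with h | h
          · omega
          · exact absurd ((List.pairwise_cons.1 hs₂).1 a h) (by omega)
        · intro x hx
          have hx₁ : ∀ y ∈ t₁, a < y := (List.pairwise_cons.1 hs₁).1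
          have hx₂ : ∀ y ∈ t₂, b < y := (List.pairwise_cons.1 hs₂).1
          constructor
          · intro hm; rcases List.mem_cons.1 hm with h | h
            · omega
            · exact absurd (hx₁ x h) (by omega)
          · intro hm; rcases List.mem_cons.1 hm with h | h
            · omega
            · exact absurd (hx₂ x h) (by omega)
      | cons h' =>
        obtain ⟨v, hv₁, hv₂, agree⟩ := ih t₂ h' hs₁.of_cons hs₂.of_cons (by simpa using hlen)
        have hva : a < v := (List.pairwise_cons.1 hs₁).1 v hv₁
        refine ⟨v, List.mem_cons_of_mem _ hv₁, ?_, ?_⟩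
        · intro hm; rcases List.mem_cons.1 hm with h | h
          · omega
          · exact hv₂ h
        · intro x hx
          constructor
          · intro hm; rcases List.mem_cons.1 hm with h | h
            · exact h ▸ by simp
            · simp [agree x hx |>.1 h]
          · intro hm; rcases List.mem_cons.1 hm with h | h
            · exact h ▸ by simp
            · simp [agree x hx |>.2 h]

def NNfor (n r t l : ℕ) : Prop :=
  (t ≤ r ∧ r + 1 ≤ l ∧ l ≤ r + n - 2) ∨
  (t = r + 1 ∧ (r + 3 ≤ l ∧ l ≤ r + n - 2 ∨ l = r + n - 1)) ∨
  (r + 2 ≤ t ∧ t ≤ r + n - 5 ∧ t + 2 ≤ l ∧ l ≤ r + n - 2) ∨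
  (t = r + n - 4 ∧ l = r + n - 3) ∨
  (t = r + n - 3 ∧ l = r + n)

lemma not_adj {n r : ℕ} (hn : 6 ≤ n) (t l : ℕ) (h2 : t < l)
    (h : NNfor n r t l) : ¬ CHedge n r t l := by
  obtain ⟨m, rfl⟩ : ∃ m, n = m + 6 := ⟨n - 6, by omega⟩
  unfold NNfor at h
  unfold CHedge Hedge HE
  rcases h with h | h | h | h | h <;> omega

lemma nn_of_not_adj {n r : ℕ} (hn : 6 ≤ n) (t l : ℕ) (h1 : 1 ≤ t) (h2 : t < l) (h3 : l ≤ r + n)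
    (h : ¬ CHedge n r t l) : NNfor n r t l := by
  obtain ⟨m, rfl⟩ : ∃ m, n = m + 6 := ⟨n - 6, by omega⟩
  unfold CHedge at h
  rw [not_or, not_or, not_or] at h
  obtain ⟨ha, hb, hc, hd⟩ := h
  unfold NNfor
  by_cases ht : t ≤ r
  · clear ha; omega
  · have hH : ¬ Hedge (m+6) (t - r) (l - r) := fun hh => ha ⟨by omega, by omega, hh⟩
    clear ha hb hc hd
    obtain ⟨a, rfl⟩ : ∃ a, t = r + a := ⟨t - r, by omega⟩
    obtain ⟨b, rfl⟩ : ∃ b, l = r + b := ⟨l - r, by omega⟩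
    rw [Nat.add_sub_cancel_left, Nat.add_sub_cancel_left] at hH
    have h1' : 1 ≤ a := by omega
    have h2' : a < b := by omega
    have h3' : b ≤ (m+6) := by omega
    have e1 : ¬(1 ≤ a ∧ a ≤ (m+6) - 5 ∧ b = a + 1) := fun hx => hH (Or.inl (Or.inl hx))
    have e2 : ¬(a = (m+6) - 4 ∧ b = (m+6) - 2) := fun hx => hH (Or.inl (Or.inr (Or.inl hx)))
    have e4 : ¬(a = (m+6) - 1 ∧ 2 ≤ b ∧ b ≤ (m+6) ∧ b ≠ (m+6) - 1) :=
      fun hx => hH (Or.inl (Or.inr (Or.inr (Or.inr (Or.inl hx)))))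
    have f3 : ¬(b = (m+6) - 2 ∧ a = (m+6) - 3) := fun hx => hH (Or.inr (Or.inr (Or.inr (Or.inl hx))))
    have f4 : ¬(b = (m+6) - 1 ∧ 2 ≤ a ∧ a ≤ (m+6) ∧ a ≠ (m+6) - 1) :=
      fun hx => hH (Or.inr (Or.inr (Or.inr (Or.inr (Or.inl hx)))))
    have f5 : ¬(b = (m+6) ∧ 1 ≤ a ∧ a ≤ (m+6) ∧ a ≠ (m+6) - 3 ∧ a ≠ (m+6)) :=
      fun hx => hH (Or.inr (Or.inr (Or.inr (Or.inr (Or.inr hx)))))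
    have g1 : ¬(a ≤ (m+6) - 5 ∧ b = a + 1) := fun hx => e1 ⟨h1', hx.1, hx.2⟩
    have g4 : ¬(b = (m+6) - 1 ∧ 2 ≤ a) := fun hx => f4 ⟨hx.1, hx.2, by omega, by omega⟩
    have g5 : ¬(b = (m+6) ∧ a ≠ (m+6) - 3) := fun hx => f5 ⟨hx.1, h1', by omega, hx.2, by omega⟩
    have g6 : ¬(a = (m+6) - 1 ∧ b = (m+6)) := fun hx => e4 ⟨hx.1, by omega, by omega, by omega⟩
    clear hH e1 e4 f4 f5
    by_cases c1 : a ≤ m + 1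
    · by_cases c2 : a = 1
      · refine Or.inr (Or.inl ⟨by omega, ?_⟩); omega
      · refine Or.inr (Or.inr (Or.inl ?_)); omega
    · by_cases c3 : a = m + 2
      · refine Or.inr (Or.inr (Or.inr (Or.inl ?_))); omega
      · by_cases c4 : a = m + 3
        · refine Or.inr (Or.inr (Or.inr (Or.inr ?_))); omega
        · exfalso; omega

def Cond (n r : ℕ) (h : Finset ℕ) : Prop :=
  (r + n - 3 ∈ h ∧ r + n ∈ h ∧ r + n - 2 ∉ h ∧ r + n - 1 ∉ h) ∨
  (r + 1 ∈ h ∧ r + 2 ∉ h ∧ r + n - 1 ∈ h ∧ r + n ∉ h) ∨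
  ((∃ c ∈ h, c ≤ r) ∧ (∃ y ∈ h, r + 1 ≤ y ∧ y ≤ r + n - 2) ∧ r + n - 1 ∉ h ∧ r + n ∉ h) ∨
  (r + n - 4 ∈ h ∧ r + n - 3 ∈ h ∧ r + n - 2 ∉ h ∧ r + n - 1 ∉ h ∧ r + n ∉ h) ∨
  ((∃ x ∈ h, r + 1 ≤ x ∧ x ≤ r + n - 5 ∧ x + 1 ∉ h ∧ ∃ y ∈ h, x + 2 ≤ y ∧ y ≤ r + n - 2) ∧
    r + n - 1 ∉ h ∧ r + n ∉ h)

lemma mem_gen {n r k : ℕ} (hn : 6 ≤ n) {h : Finset ℕ} (hsub : h ⊆ Icc 1 (r + n))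
    (hcard : h.card = k + 2) (hc : Cond n r h) :
    h ∈ hsGens (CHedge n r) (Icc 1 (r + n)) k := by
  obtain ⟨m, rfl⟩ : ∃ m, n = m + 6 := ⟨n - 6, by omega⟩
  have hbd : ∀ a ∈ h, 1 ≤ a ∧ a ≤ r + (m+6) := fun a ha => by
    have := hsub ha; rw [mem_Icc] at this; exact this
  refine ⟨hsub, hcard, ?_⟩
  rcases hc with ⟨hp, hz, hd, he⟩ | ⟨h1, h2, he, hz⟩ | ⟨⟨c, hc, hcr⟩, ⟨y, hy, hy1, hy2⟩, he, hz⟩ |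
    ⟨hq, hp, hd, he, hz⟩ | ⟨⟨x, hx, hx1, hx2, hx3, y, hy, hy1, hy2⟩, he, hz⟩
  · -- C4 : witness p = r+n-3
    refine ⟨r + (m+6) - 3, hp, ⟨r + (m+6), hz, by omega⟩, ?_⟩
    intro l hl hlt
    apply not_adj hn _ _ hlt
    have hle := (hbd l hl).2
    have hne1 : l ≠ r + (m+6) - 2 := by rintro rfl; exact hd hl
    have hne2 : l ≠ r + (m+6) - 1 := by rintro rfl; exact he hl
    unfold NNfor; omega
  · -- C2' : witness r+1
    refine ⟨r + 1, h1, ⟨r + (m+6) - 1, he, by omega⟩, ?_⟩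
    intro l hl hlt
    apply not_adj hn _ _ hlt
    have hle := (hbd l hl).2
    have hne1 : l ≠ r + 2 := by rintro rfl; exact h2 hl
    have hne2 : l ≠ r + (m+6) := by rintro rfl; exact hz hl
    unfold NNfor; omega
  · -- Ca : witness max of clique part
    have hcf : c ∈ h.filter (fun w => w ≤ r) := mem_filter.2 ⟨hc, hcr⟩
    set t := (h.filter (fun w => w ≤ r)).max' ⟨c, hcf⟩ with htdef
    have htf : t ∈ h.filter (fun w => w ≤ r) := max'_mem _ _
    have hth : t ∈ h := (mem_filter.1 htf).1
    have htr : t ≤ r := (mem_filter.1 htf).2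
    have htmax : ∀ w ∈ h, w ≤ r → w ≤ t := fun w hw hwr =>
      le_max' (h.filter (fun w => w ≤ r)) w (mem_filter.2 ⟨hw, hwr⟩)
    refine ⟨t, hth, ⟨y, hy, by omega⟩, ?_⟩
    intro l hl hlt
    apply not_adj hn _ _ hlt
    have hle := (hbd l hl).2
    have hgr : r + 1 ≤ l := by
      by_contra hcon
      exact absurd (htmax l hl (by omega)) (by omega)
    have hne1 : l ≠ r + (m+6) - 1 := by rintro rfl; exact he hl
    have hne2 : l ≠ r + (m+6) := by rintro rfl; exact hz hl
    unfold NNfor; omega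
  · -- Cb : witness q = r+n-4
    refine ⟨r + (m+6) - 4, hq, ⟨r + (m+6) - 3, hp, by omega⟩, ?_⟩
    intro l hl hlt
    apply not_adj hn _ _ hlt
    have hle := (hbd l hl).2
    have hne1 : l ≠ r + (m+6) - 2 := by rintro rfl; exact hd hl
    have hne2 : l ≠ r + (m+6) - 1 := by rintro rfl; exact he hl
    have hne3 : l ≠ r + (m+6) := by rintro rfl; exact hz hl
    unfold NNfor; omega
  · -- Cc : witness x
    refine ⟨x, hx, ⟨y, hy, by omega⟩, ?_⟩
    intro l hl hlt
    apply not_adj hn _ _ hlt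
    have hle := (hbd l hl).2
    have hne1 : l ≠ x + 1 := by rintro rfl; exact hx3 hl
    have hne2 : l ≠ r + (m+6) - 1 := by rintro rfl; exact he hl
    have hne3 : l ≠ r + (m+6) := by rintro rfl; exact hz hl
    unfold NNfor; omega

lemma cond_of_mem {n r k : ℕ} (hn : 6 ≤ n) {h : Finset ℕ}
    (hm : h ∈ hsGens (CHedge n r) (Icc 1 (r + n)) k) : Cond n r h := by
  obtain ⟨m, rfl⟩ : ∃ m, n = m + 6 := ⟨n - 6, by omega⟩
  obtain ⟨hsub, hcard, t, ht, ⟨l₀, hl₀, hlt₀⟩, hall⟩ := hm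
  have hbd : ∀ a ∈ h, 1 ≤ a ∧ a ≤ r + (m+6) := fun a ha => by
    have := hsub ha; rw [mem_Icc] at this; exact this
  have hNN : ∀ l ∈ h, t < l → NNfor (m+6) r t l := fun l hl hlt =>
    nn_of_not_adj hn t l (hbd t ht).1 hlt (hbd l hl).2 (hall l hl hlt)
  have ht1 : 1 ≤ t := (hbd t ht).1
  have ht2 : t ≤ r + (m+6) := (hbd t ht).2
  have hn0 := hNN l₀ hl₀ hlt₀
  have hl₀2 := (hbd l₀ hl₀).2
  unfold Cond
  by_cases hcr : t ≤ r
  · -- Ca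
    refine Or.inr (Or.inr (Or.inl ⟨⟨t, ht, hcr⟩, ⟨l₀, hl₀, ?_⟩, ?_, ?_⟩))
    · revert hn0; unfold NNfor; omega
    · intro he; have := hNN _ he (by omega); revert this; unfold NNfor; omega
    · intro hz; have := hNN _ hz (by omega); revert this; unfold NNfor; omega
  · by_cases ht3 : t = r + 1
    · subst ht3
      have h2 : r + 2 ∉ h := by
        intro h2; have := hNN _ h2 (by omega); revert this; unfold NNfor; omega
      have hz : r + (m+6) ∉ h := by
        intro hz; have := hNN _ hz (by omega); revert this; unfold NNfor; omega
      by_cases he : r + (m+6) - 1 ∈ h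
      · exact Or.inr (Or.inl ⟨ht, h2, he, hz⟩)
      · -- Cc with x = r+1
        refine Or.inr (Or.inr (Or.inr (Or.inr ⟨⟨r + 1, ht, le_refl _, by omega, h2,
          l₀, hl₀, ?_⟩, he, hz⟩)))
        have hne : l₀ ≠ r + (m+6) - 1 := by rintro rfl; exact he hl₀
        revert hn0; unfold NNfor; omega
    · by_cases ht4 : t ≤ r + (m+6) - 5
      · -- Cc with x = t
        have hx3 : t + 1 ∉ h := by
          intro hx; have := hNN _ hx (by omega); revert this; unfold NNfor; omega
        have he : r + (m+6) - 1 ∉ h := by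
          intro he; have := hNN _ he (by omega); revert this; unfold NNfor; omega
        have hz : r + (m+6) ∉ h := by
          intro hz; have := hNN _ hz (by omega); revert this; unfold NNfor; omega
        refine Or.inr (Or.inr (Or.inr (Or.inr ⟨⟨t, ht, by omega, ht4, hx3,
          l₀, hl₀, ?_⟩, he, hz⟩)))
        revert hn0; unfold NNfor; omega
      · by_cases ht5 : t = r + (m+6) - 4
        · subst ht5
          have hl₀3 : l₀ = r + (m+6) - 3 := by revert hn0; unfold NNfor; omega
          have hd : r + (m+6) - 2 ∉ h := by
            intro hd; have := hNN _ hd (by omega); revert this; unfold NNfor; omega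
          have he : r + (m+6) - 1 ∉ h := by
            intro he; have := hNN _ he (by omega); revert this; unfold NNfor; omega
          have hz : r + (m+6) ∉ h := by
            intro hz; have := hNN _ hz (by omega); revert this; unfold NNfor; omega
          exact Or.inr (Or.inr (Or.inr (Or.inl ⟨ht, hl₀3 ▸ hl₀, hd, he, hz⟩)))
        · by_cases ht6 : t = r + (m+6) - 3
          · subst ht6
            have hl₀3 : l₀ = r + (m+6) := by revert hn0; unfold NNfor; omega
            have hd : r + (m+6) - 2 ∉ h := by
              intro hd; have := hNN _ hd (by omega); revert this; unfold NNfor; omega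
            have he : r + (m+6) - 1 ∉ h := by
              intro he; have := hNN _ he (by omega); revert this; unfold NNfor; omega
            exact Or.inl ⟨ht, hl₀3 ▸ hl₀, hd, he⟩
          · exfalso; revert hn0; unfold NNfor; omega

def CondM (r m : ℕ) (h : Finset ℕ) : Prop :=
  (r+m+3 ∈ h ∧ r+m+6 ∈ h ∧ r+m+4 ∉ h ∧ r+m+5 ∉ h) ∨
  (r+1 ∈ h ∧ r+2 ∉ h ∧ r+m+5 ∈ h ∧ r+m+6 ∉ h) ∨
  ((∃ c ∈ h, c ≤ r) ∧ (∃ y ∈ h, r+1 ≤ y ∧ y ≤ r+m+4) ∧ r+m+5 ∉ h ∧ r+m+6 ∉ h) ∨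
  (r+m+2 ∈ h ∧ r+m+3 ∈ h ∧ r+m+4 ∉ h ∧ r+m+5 ∉ h ∧ r+m+6 ∉ h) ∨
  ((∃ x ∈ h, r+1 ≤ x ∧ x ≤ r+m+1 ∧ x+1 ∉ h ∧ ∃ y ∈ h, x+2 ≤ y ∧ y ≤ r+m+4) ∧
    r+m+5 ∉ h ∧ r+m+6 ∉ h)

lemma condM_iff {r m : ℕ} {h : Finset ℕ} : Cond (m+6) r h ↔ CondM r m h := by
  unfold Cond CondM
  have e1 : r + (m+6) - 1 = r+m+5 := by omega
  have e2 : r + (m+6) - 2 = r+m+4 := by omega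
  have e3 : r + (m+6) - 3 = r+m+3 := by omega
  have e4 : r + (m+6) - 4 = r+m+2 := by omega
  have e5 : r + (m+6) - 5 = r+m+1 := by omega
  have e0 : r + (m+6) = r+m+6 := by omega
  rw [e1, e2, e3, e4, e5, e0]

lemma buildC4 {r m : ℕ} {h : Finset ℕ} (h1 : r+m+3 ∈ h) (h2 : r+m+6 ∈ h)
    (h3 : r+m+4 ∉ h) (h4 : r+m+5 ∉ h) : CondM r m h := Or.inl ⟨h1, h2, h3, h4⟩

lemma buildC2 {r m : ℕ} {h : Finset ℕ} (h1 : r+1 ∈ h) (h2 : r+2 ∉ h)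
    (h3 : r+m+5 ∈ h) (h4 : r+m+6 ∉ h) : CondM r m h := Or.inr (Or.inl ⟨h1, h2, h3, h4⟩)

lemma buildCA {r m : ℕ} {h : Finset ℕ} (c y : ℕ) (hc : c ∈ h) (hcr : c ≤ r)
    (hy : y ∈ h) (hy1 : r+1 ≤ y) (hy2 : y ≤ r+m+4) (he : r+m+5 ∉ h) (hz : r+m+6 ∉ h) :
    CondM r m h := Or.inr (Or.inr (Or.inl ⟨⟨c, hc, hcr⟩, ⟨y, hy, hy1, hy2⟩, he, hz⟩))

lemma buildCB {r m : ℕ} {h : Finset ℕ} (h1 : r+m+2 ∈ h) (h2 : r+m+3 ∈ h)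
    (h3 : r+m+4 ∉ h) (h4 : r+m+5 ∉ h) (h5 : r+m+6 ∉ h) : CondM r m h :=
  Or.inr (Or.inr (Or.inr (Or.inl ⟨h1, h2, h3, h4, h5⟩)))

lemma buildCC {r m : ℕ} {h : Finset ℕ} (x y : ℕ) (hx : x ∈ h) (hx1 : r+1 ≤ x)
    (hx2 : x ≤ r+m+1) (hx3 : x+1 ∉ h) (hy : y ∈ h) (hy1 : x+2 ≤ y) (hy2 : y ≤ r+m+4)
    (he : r+m+5 ∉ h) (hz : r+m+6 ∉ h) : CondM r m h :=
  Or.inr (Or.inr (Or.inr (Or.inr ⟨⟨x, hx, hx1, hx2, hx3, y, hy, hy1, hy2⟩, he, hz⟩)))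

lemma mem_ie {f : Finset ℕ} {u v a : ℕ} :
    a ∈ insert v (f.erase u) ↔ a = v ∨ (a ∈ f ∧ a ≠ u) := by
  simp only [mem_insert, mem_erase]
  tauto

lemma card_ie {f : Finset ℕ} {u v : ℕ} (hu : u ∈ f) (hv : v ∉ f) :
    (insert v (f.erase u)).card = f.card := by
  rw [card_insert_of_notMem (fun hc => hv (mem_of_mem_erase hc))]
  rw [← Finset.card_erase_add_one hu]

lemma count_lemma {f g : Finset ℕ} (hc : f.card = g.card) {v w : ℕ}
    (hvg : v ∈ g) (hvf : v ∉ f) (hw : w ∈ f) (hwv : v < w)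
    (agree : ∀ x, x < v → (x ∈ g ↔ x ∈ f))
    (huniq : ∀ l ∈ f, v < l → l = w) :
    g = insert v (f.filter (fun x => x < v)) := by
  have hsub : insert v (f.filter (fun x => x < v)) ⊆ g := by
    intro a ha
    rcases mem_insert.1 ha with rfl | ha
    · exact hvg
    · obtain ⟨haf, hav⟩ := mem_filter.1 ha
      exact (agree a hav).2 haf
  have hfl : f.filter (fun x => v ≤ x) = {w} := by
    apply Finset.eq_singleton_iff_unique_mem.2
    refine ⟨mem_filter.2 ⟨hw, by omega⟩, ?_⟩
    intro a ha
    obtain ⟨haf, hav⟩ := mem_filter.1 ha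
    have hane : a ≠ v := fun hh => hvf (hh ▸ haf)
    exact huniq a haf (by omega)
  have hcf : (f.filter (fun x => x < v)).card + 1 = f.card := by
    have := Finset.card_filter_add_card_filter_not (s := f) (p := fun x => x < v)
    simp only [not_lt] at this
    rw [hfl] at this
    simpa using this
  have hci : (insert v (f.filter (fun x => x < v))).card = f.card := by
    rw [card_insert_of_notMem (fun hc => hvf (mem_filter.1 hc).1)]
    exact hcf
  exact (Finset.eq_of_subset_of_card_le hsub (by omega)).symm

lemma exchange {n r k : ℕ} (hn : 6 ≤ n) (hk3 : k ≠ n - 4)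
    {f g : Finset ℕ}
    (hf : f ∈ hsGens (CHedge n r) (Icc 1 (r + n)) k)
    (hg : g ∈ hsGens (CHedge n r) (Icc 1 (r + n)) k)
    {v₀ : ℕ} (hv₀g : v₀ ∈ g) (hv₀f : v₀ ∉ f)
    (agree : ∀ x, x < v₀ → (x ∈ g ↔ x ∈ f)) :
    ∃ v u : ℕ, v ∈ g ∧ v ∉ f ∧ u ∈ f ∧ v < u ∧
      insert v (f.erase u) ∈ hsGens (CHedge n r) (Icc 1 (r + n)) k := by
  obtain ⟨m, rfl⟩ : ∃ m, n = m + 6 := ⟨n - 6, by omega⟩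
  have hk3' : k ≠ m + 2 := by omega
  have hfC : CondM r m f := condM_iff.1 (cond_of_mem hn hf)
  have hgC : CondM r m g := condM_iff.1 (cond_of_mem hn hg)
  have hfsub : f ⊆ Icc 1 (r+(m+6)) := hf.1
  have hfcard : f.card = k + 2 := hf.2.1
  have hgsub : g ⊆ Icc 1 (r+(m+6)) := hg.1
  have hgcard : g.card = k + 2 := hg.2.1
  have fbd : ∀ a ∈ f, 1 ≤ a ∧ a ≤ r+m+6 := fun a ha => by
    have := hfsub ha; rw [mem_Icc] at this; omega
  have gbd : ∀ a ∈ g, 1 ≤ a ∧ a ≤ r+m+6 := fun a ha => by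
    have := hgsub ha; rw [mem_Icc] at this; omega
  have hv₀b := gbd v₀ hv₀g
  obtain ⟨u₀, hu₀f, hu₀v⟩ : ∃ u ∈ f, v₀ < u := by
    by_contra hcon
    push_neg at hcon
    have hfg : f ⊆ g := fun x hx => by
      have hxv := hcon x hx
      have hxne : x ≠ v₀ := fun hh => hv₀f (hh ▸ hx)
      exact (agree x (by omega)).2 hx
    have heq : f = g := Finset.eq_of_subset_of_card_le hfg (by omega)
    exact hv₀f (heq ▸ hv₀g)
  have hu₀b := fbd u₀ hu₀f
  have finish : ∀ v u : ℕ, v ∈ g → v ∉ f → u ∈ f → v < u →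
      CondM r m (insert v (f.erase u)) →
      ∃ v' u' : ℕ, v' ∈ g ∧ v' ∉ f ∧ u' ∈ f ∧ v' < u' ∧
        insert v' (f.erase u') ∈ hsGens (CHedge (m+6) r) (Icc 1 (r + (m+6))) k := by
    intro v u h1 h2 h3 h4 h5
    refine ⟨v, u, h1, h2, h3, h4, mem_gen hn ?_ ?_ (condM_iff.2 h5)⟩
    · intro a ha
      rcases mem_ie.1 ha with rfl | ⟨haf, -⟩
      · exact hgsub h1
      · exact hfsub haf
    · rw [card_ie h3 h2]; exact hfcard
  -- shared handler for v₀ ≤ r when e,z ∉ f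
  have lowcase : r+m+5 ∉ f → r+m+6 ∉ f → ∀ wb ∈ f, r+1 ≤ wb → wb ≤ r+m+4 → v₀ ≤ r →
      ∃ v' u' : ℕ, v' ∈ g ∧ v' ∉ f ∧ u' ∈ f ∧ v' < u' ∧
        insert v' (f.erase u') ∈ hsGens (CHedge (m+6) r) (Icc 1 (r + (m+6))) k := by
    intro he hz wb hwbf hwb1 hwb2 hv₀r
    by_cases htwo : ∃ a ∈ f, ∃ b ∈ f, r+1 ≤ a ∧ a ≤ r+m+4 ∧ r+1 ≤ b ∧ b ≤ r+m+4 ∧ a ≠ b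
    · obtain ⟨a, ha, b, hb, ha1, ha2, hb1, hb2, hab⟩ := htwo
      rcases le_or_gt a b with hle | hlt
      · refine finish v₀ b hv₀g hv₀f hb (by omega) ?_
        refine buildCA v₀ a (mem_ie.2 (Or.inl rfl)) hv₀r
          (mem_ie.2 (Or.inr ⟨ha, hab⟩)) ha1 ha2 ?_ ?_
        · exact fun hc => (mem_ie.1 hc).elim (fun hh => by omega) (fun hh => he hh.1)
        · exact fun hc => (mem_ie.1 hc).elim (fun hh => by omega) (fun hh => hz hh.1)
      · refine finish v₀ a hv₀g hv₀f ha (by omega) ?_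
        refine buildCA v₀ b (mem_ie.2 (Or.inl rfl)) hv₀r
          (mem_ie.2 (Or.inr ⟨hb, fun hh => hab hh.symm⟩)) hb1 hb2 ?_ ?_
        · exact fun hc => (mem_ie.1 hc).elim (fun hh => by omega) (fun hh => he hh.1)
        · exact fun hc => (mem_ie.1 hc).elim (fun hh => by omega) (fun hh => hz hh.1)
    · by_cases hmid : ∃ c' ∈ f, v₀ < c' ∧ c' ≤ r
      · obtain ⟨c', hc'f, hc'1, hc'2⟩ := hmid
        refine finish v₀ c' hv₀g hv₀f hc'f hc'1 ?_
        refine buildCA v₀ wb (mem_ie.2 (Or.inl rfl)) hv₀r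
          (mem_ie.2 (Or.inr ⟨hwbf, by omega⟩)) hwb1 hwb2 ?_ ?_
        · exact fun hc => (mem_ie.1 hc).elim (fun hh => by omega) (fun hh => he hh.1)
        · exact fun hc => (mem_ie.1 hc).elim (fun hh => by omega) (fun hh => hz hh.1)
      · exfalso
        have huniq : ∀ l ∈ f, v₀ < l → l = wb := by
          intro l hl hlt
          have hlb := fbd l hl
          by_cases hlr : l ≤ r
          · exact absurd ⟨l, hl, hlt, hlr⟩ hmid
          · have hl5 : l ≠ r+m+5 := fun hh => he (hh ▸ hl)
            have hl6 : l ≠ r+m+6 := fun hh => hz (hh ▸ hl)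
            by_contra hne
            exact htwo ⟨l, hl, wb, hwbf, by omega, by omega, hwb1, hwb2, hne⟩
        have hcount := count_lemma (hfcard.trans hgcard.symm) hv₀g hv₀f hwbf
          (by omega) agree huniq
        have hgr : ∀ x ∈ g, x ≤ r := by
          intro x hx
          rw [hcount] at hx
          rcases mem_insert.1 hx with rfl | hx
          · omega
          · have := (mem_filter.1 hx).2; omega
        rcases hgC with ⟨hh, -⟩ | ⟨hh, -⟩ | ⟨-, ⟨y, hy, hy1, -⟩, -⟩ | ⟨hh, -⟩ |
          ⟨⟨x, hx, hx1, -⟩, -⟩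
        · have := hgr _ hh; omega
        · have := hgr _ hh; omega
        · have := hgr _ hy; omega
        · have := hgr _ hh; omega
        · have := hgr _ hx; omega
  rcases hfC with ⟨hp, hz, hd, he⟩ | ⟨h1, h2, he, hz⟩ |
    ⟨⟨cb, hcbf, hcbr⟩, ⟨yb, hybf, hyb1, hyb2⟩, he, hz⟩ | ⟨hq, hp, hd, he, hz⟩ |
    ⟨⟨xb, hxbf, hxb1, hxb2, hxb3, yb, hybf, hyb1, hyb2⟩, he, hz⟩
  -- ═══════════ Branch T4 : p,z ∈ f, d,e ∉ f ═══════════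
  · have hv₀p : v₀ ≠ r+m+3 := fun hh => hv₀f (hh ▸ hp)
    have hv₀z : v₀ ≠ r+m+6 := fun hh => hv₀f (hh ▸ hz)
    by_cases hc1 : v₀ ≤ r
    · refine finish v₀ (r+m+6) hv₀g hv₀f hz (by omega) ?_
      refine buildCA v₀ (r+m+3) (mem_ie.2 (Or.inl rfl)) hc1
        (mem_ie.2 (Or.inr ⟨hp, by omega⟩)) (by omega) (by omega) ?_ ?_
      · exact fun hc => (mem_ie.1 hc).elim (fun hh => by omega) (fun hh => he hh.1)
      · exact fun hc => (mem_ie.1 hc).elim (fun hh => by omega) (fun hh => hh.2 (by omega))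
    · by_cases hc2 : v₀ ≤ r+m+1
      · by_cases hcl : ∃ c ∈ f, c ≤ r
        · obtain ⟨c, hcf, hcr⟩ := hcl
          refine finish v₀ (r+m+6) hv₀g hv₀f hz (by omega) ?_
          refine buildCA c (r+m+3) (mem_ie.2 (Or.inr ⟨hcf, by omega⟩)) hcr
            (mem_ie.2 (Or.inr ⟨hp, by omega⟩)) (by omega) (by omega) ?_ ?_
          · exact fun hc => (mem_ie.1 hc).elim (fun hh => by omega) (fun hh => he hh.1)
          · exact fun hc => (mem_ie.1 hc).elim (fun hh => by omega) (fun hh => hh.2 (by omega))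
        · by_cases hqf : r+m+2 ∈ f
          · refine finish v₀ (r+m+6) hv₀g hv₀f hz (by omega) ?_
            refine buildCB (mem_ie.2 (Or.inr ⟨hqf, by omega⟩))
              (mem_ie.2 (Or.inr ⟨hp, by omega⟩)) ?_ ?_ ?_
            · exact fun hc => (mem_ie.1 hc).elim (fun hh => by omega) (fun hh => hd hh.1)
            · exact fun hc => (mem_ie.1 hc).elim (fun hh => by omega) (fun hh => he hh.1)
            · exact fun hc => (mem_ie.1 hc).elim (fun hh => by omega) (fun hh => hh.2 (by omega))
          · -- no clique, q ∉ f : gap witness via max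
            set f' := insert v₀ (f.erase (r+m+6)) with hf'def
            have hvmem : v₀ ∈ f' := mem_ie.2 (Or.inl rfl)
            set S := f'.filter (fun w => r+1 ≤ w ∧ w ≤ r+m+1) with hSdef
            have hSne : S.Nonempty := ⟨v₀, mem_filter.2 ⟨hvmem, by omega, by omega⟩⟩
            set x := S.max' hSne with hxdef
            have hxS : x ∈ S := S.max'_mem hSne
            have hxf' : x ∈ f' := (mem_filter.1 hxS).1
            have hxb : r+1 ≤ x ∧ x ≤ r+m+1 := (mem_filter.1 hxS).2
            have hxmax : ∀ w ∈ S, w ≤ x := fun w hw => S.le_max' w hw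
            have hx1 : x + 1 ∉ f' := by
              intro hcc
              have hvS : v₀ ≤ x := hxmax v₀ (mem_filter.2 ⟨hvmem, by omega, by omega⟩)
              rcases mem_ie.1 hcc with hh | ⟨hh, -⟩
              · omega
              · have hb := fbd _ hh
                have hgr : r + 1 ≤ x + 1 := by
                  by_contra hcon
                  exact hcl ⟨x+1, hh, by omega⟩
                by_cases hle : x + 1 ≤ r+m+1
                · have := hxmax (x+1) (mem_filter.2 ⟨hcc, by omega, hle⟩); omega
                · have hq2 : x + 1 = r+m+2 := by omega
                  exact hqf (hq2 ▸ hh)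
            refine finish v₀ (r+m+6) hv₀g hv₀f hz (by omega) ?_
            refine buildCC x (r+m+3) hxf' hxb.1 hxb.2 hx1
              (mem_ie.2 (Or.inr ⟨hp, by omega⟩)) (by omega) (by omega) ?_ ?_
            · exact fun hc => (mem_ie.1 hc).elim (fun hh => by omega) (fun hh => he hh.1)
            · exact fun hc => (mem_ie.1 hc).elim (fun hh => by omega) (fun hh => hh.2 (by omega))
      · by_cases hc3 : v₀ = r+m+2
        · refine finish v₀ (r+m+6) hv₀g hv₀f hz (by omega) ?_
          refine buildCB (mem_ie.2 (Or.inl hc3.symm))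
            (mem_ie.2 (Or.inr ⟨hp, by omega⟩)) ?_ ?_ ?_
          · exact fun hc => (mem_ie.1 hc).elim (fun hh => by omega) (fun hh => hd hh.1)
          · exact fun hc => (mem_ie.1 hc).elim (fun hh => by omega) (fun hh => he hh.1)
          · exact fun hc => (mem_ie.1 hc).elim (fun hh => by omega) (fun hh => hh.2 (by omega))
        · -- v₀ = r+m+4 or r+m+5 : then f - z + v₀ = g
          have hc45 : v₀ = r+m+4 ∨ v₀ = r+m+5 := by omega
          have huniq : ∀ l ∈ f, v₀ < l → l = r+m+6 := by
            intro l hl hlt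
            have hlb := fbd l hl
            have hl4 : l ≠ r+m+4 := fun hh => hd (hh ▸ hl)
            have hl5 : l ≠ r+m+5 := fun hh => he (hh ▸ hl)
            omega
          have hcount := count_lemma (hfcard.trans hgcard.symm) hv₀g hv₀f hz
            (by omega) agree huniq
          have hfe : f.erase (r+m+6) = f.filter (fun x => x < v₀) := by
            ext a
            simp only [mem_erase, mem_filter]
            constructor
            · rintro ⟨hne, haf⟩
              refine ⟨haf, ?_⟩
              have hab := fbd a haf
              have hane : a ≠ v₀ := fun hh => hv₀f (hh ▸ haf)
              by_contra hcon
              exact hne (huniq a haf (by omega))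
            · rintro ⟨haf, hlt⟩
              exact ⟨by omega, haf⟩
          refine ⟨v₀, r+m+6, hv₀g, hv₀f, hz, by omega, ?_⟩
          rw [show insert v₀ (f.erase (r+m+6)) = g by rw [hfe, ← hcount]]
          exact hg
  -- ═══════════ Branch C2 : r+1 ∈ f, r+2 ∉ f, e ∈ f, z ∉ f ═══════════
  · have hv₀1 : v₀ ≠ r+1 := fun hh => hv₀f (hh ▸ h1)
    have hv₀e : v₀ ≠ r+m+5 := fun hh => hv₀f (hh ▸ he)
    have hv₀z : v₀ ≤ r+m+5 := by
      rcases Nat.lt_or_ge v₀ (r+m+6) with hh | hh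
      · omega
      · exfalso
        have : u₀ = r+m+6 := by omega
        exact hz (this ▸ hu₀f)
    by_cases hc1 : v₀ ≤ r
    · refine finish v₀ (r+m+5) hv₀g hv₀f he (by omega) ?_
      refine buildCA v₀ (r+1) (mem_ie.2 (Or.inl rfl)) hc1
        (mem_ie.2 (Or.inr ⟨h1, by omega⟩)) (by omega) (by omega) ?_ ?_
      · exact fun hc => (mem_ie.1 hc).elim (fun hh => by omega) (fun hh => hh.2 (by omega))
      · exact fun hc => (mem_ie.1 hc).elim (fun hh => by omega) (fun hh => hz hh.1)
    · by_cases hcl : ∃ c ∈ f, c ≤ r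
      · obtain ⟨c, hcf, hcr⟩ := hcl
        refine finish v₀ (r+m+5) hv₀g hv₀f he (by omega) ?_
        refine buildCA c (r+1) (mem_ie.2 (Or.inr ⟨hcf, by omega⟩)) hcr
          (mem_ie.2 (Or.inr ⟨h1, by omega⟩)) (by omega) (by omega) ?_ ?_
        · exact fun hc => (mem_ie.1 hc).elim (fun hh => by omega) (fun hh => hh.2 (by omega))
        · exact fun hc => (mem_ie.1 hc).elim (fun hh => by omega) (fun hh => hz hh.1)
      · by_cases hv' : ∃ w ∈ g, w ∉ f ∧ r+3 ≤ w ∧ w ≤ r+m+4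
        · obtain ⟨w, hwg, hwf, hw1, hw2⟩ := hv'
          refine finish w (r+m+5) hwg hwf he (by omega) ?_
          refine buildCC (r+1) w (mem_ie.2 (Or.inr ⟨h1, by omega⟩)) (by omega) (by omega)
            ?_ (mem_ie.2 (Or.inl rfl)) (by omega) (by omega) ?_ ?_
          · exact fun hc => (mem_ie.1 hc).elim (fun hh => by omega) (fun hh => h2 hh.1)
          · exact fun hc => (mem_ie.1 hc).elim (fun hh => by omega) (fun hh => hh.2 (by omega))
          · exact fun hc => (mem_ie.1 hc).elim (fun hh => by omega) (fun hh => hz hh.1)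
        · -- v₀ = r+2, no clique, no middle exchange vertex available
          have hv₀2 : v₀ = r+2 := by
            by_contra hne
            exact hv' ⟨v₀, hv₀g, hv₀f, by omega, by omega⟩
          subst hv₀2
          set h' := insert (r+2) (f.erase (r+m+5)) with hh'def
          by_cases hGen : CondM r m h'
          · exact finish (r+2) (r+m+5) hv₀g hv₀f he (by omega) hGen
          · exfalso
            have hclaim : ∀ w ∈ g, w ∉ f → w = r+2 ∨ w = r+m+6 := by
              intro w hwg hwf
              have hwb := gbd w hwg
              by_cases hw2 : w < r+2
              · exact absurd ((agree w hw2).1 hwg) hwf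
              · have hwe : w ≠ r+m+5 := fun hh => hwf (hh ▸ he)
                by_contra hcon
                push_neg at hcon
                exact hv' ⟨w, hwg, hwf, by omega, by omega⟩
            by_cases hzg : r+m+6 ∈ g
            · -- C4 for g, climb to contradiction k = m+2
              have hpg : r+m+3 ∈ g := by
                rcases hgC with ⟨hh, -⟩ | ⟨-, -, -, hh⟩ | ⟨-, -, -, hh⟩ |
                  ⟨-, -, -, -, hh⟩ | ⟨-, -, hh⟩
                · exact hh
                all_goals exact absurd hzg hh
              have hpf : r+m+3 ∈ f := by
                by_contra hcon
                rcases hclaim _ hpg hcon with hh | hh <;> omega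
              have hpf' : r+m+3 ∈ h' := mem_ie.2 (Or.inr ⟨hpf, by omega⟩)
              have h1' : r+1 ∈ h' := mem_ie.2 (Or.inr ⟨h1, by omega⟩)
              have he' : r+m+5 ∉ h' := by
                exact fun hc => (mem_ie.1 hc).elim (fun hh => by omega) (fun hh => hh.2 (by omega))
              have hz' : r+m+6 ∉ h' := by
                exact fun hc => (mem_ie.1 hc).elim (fun hh => by omega) (fun hh => hz hh.1)
              have climb : ∀ i, i ≤ m+1 → r+1+i ∈ h' := by
                intro i
                induction i with
                | zero => intro _; exact h1'
                | succ i ih =>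
                  intro hile
                  have hprev := ih (by omega)
                  by_contra habs
                  exact hGen (buildCC (r+1+i) (r+m+3) hprev (by omega) (by omega)
                    (by rw [show r+1+i+1 = r+1+(i+1) by omega]; exact habs)
                    hpf' (by omega) (by omega) he' hz')
              have hdh : r+m+4 ∈ h' := by
                by_contra habs
                have hqh : r+m+2 ∈ h' := by
                  have := climb (m+1) (le_refl _)
                  rw [show r+1+(m+1) = r+m+2 by omega] at this
                  exact this
                exact hGen (buildCB hqh hpf' habs he' hz')
              have hIcc : Icc (r+1) (r+m+4) ⊆ h' := by
                intro j hj
                rw [mem_Icc] at hj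
                by_cases hj1 : j ≤ r+m+2
                · have := climb (j - (r+1)) (by omega)
                  rw [show r+1+(j-(r+1)) = j by omega] at this
                  exact this
                · by_cases hj2 : j = r+m+3
                  · exact hj2 ▸ hpf'
                  · have : j = r+m+4 := by omega
                    exact this ▸ hdh
              have hIcc2 : h' ⊆ Icc (r+1) (r+m+4) := by
                intro a ha
                rw [mem_Icc]
                rcases mem_ie.1 ha with hh | ⟨haf, hane⟩
                · omega
                · have hab := fbd a haf
                  have hnr : ¬ a ≤ r := fun hcon => hcl ⟨a, haf, hcon⟩
                  have haz : a ≠ r+m+6 := fun hcon => hz (hcon ▸ haf)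
                  omega
              have heq : h' = Icc (r+1) (r+m+4) := Finset.Subset.antisymm hIcc2 hIcc
              have hcard1 : h'.card = k + 2 := by
                rw [hh'def, card_ie he hv₀f]; exact hfcard
              have hcard2 : (Icc (r+1) (r+m+4)).card = m + 4 := by
                rw [Nat.card_Icc]; omega
              rw [heq, hcard2] at hcard1
              omega
            · -- z ∉ g : then g = h', contradiction with ¬CondM h'
              have heg : r+m+5 ∉ g := by
                intro heg
                rcases hgC with ⟨-, hh, -⟩ | ⟨-, hh, -⟩ | ⟨-, -, hh, -⟩ |
                  ⟨-, -, -, hh, -⟩ | ⟨-, hh, -⟩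
                · exact hzg hh
                · exact hh hv₀g
                all_goals exact hh heg
              have hsubg : g ⊆ h' := by
                intro x hx
                by_cases hxf : x ∈ f
                · refine mem_ie.2 (Or.inr ⟨hxf, ?_⟩)
                  intro hcon
                  exact heg (hcon ▸ hx)
                · rcases hclaim x hx hxf with hh | hh
                  · exact mem_ie.2 (Or.inl hh)
                  · exact absurd (hh ▸ hx) hzg
              have hcard1 : h'.card = k + 2 := by
                rw [hh'def, card_ie he hv₀f]; exact hfcard
              have heqg : g = h' := Finset.eq_of_subset_of_card_le hsubg (by omega)
              exact hGen (heqg ▸ hgC)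
  -- ═══════════ Branch CA : clique vertex cb ∈ f, yb ∈ [r+1,r+m+4], e,z ∉ f ═══════════
  · have hu₀d : u₀ ≤ r+m+4 := by
      have h5 : u₀ ≠ r+m+5 := fun hh => he (hh ▸ hu₀f)
      have h6 : u₀ ≠ r+m+6 := fun hh => hz (hh ▸ hu₀f)
      omega
    by_cases hc1 : v₀ ≤ r
    · exact lowcase he hz yb hybf hyb1 hyb2 hc1
    · refine finish v₀ u₀ hv₀g hv₀f hu₀f hu₀v ?_
      refine buildCA cb v₀ (mem_ie.2 (Or.inr ⟨hcbf, by omega⟩)) hcbr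
        (mem_ie.2 (Or.inl rfl)) (by omega) (by omega) ?_ ?_
      · exact fun hc => (mem_ie.1 hc).elim (fun hh => by omega) (fun hh => he hh.1)
      · exact fun hc => (mem_ie.1 hc).elim (fun hh => by omega) (fun hh => hz hh.1)
  -- ═══════════ Branch CB : q,p ∈ f, d,e,z ∉ f ═══════════
  · have hu₀d : u₀ ≤ r+m+3 := by
      have h4 : u₀ ≠ r+m+4 := fun hh => hd (hh ▸ hu₀f)
      have h5 : u₀ ≠ r+m+5 := fun hh => he (hh ▸ hu₀f)
      have h6 : u₀ ≠ r+m+6 := fun hh => hz (hh ▸ hu₀f)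
      omega
    have hv₀q : v₀ ≠ r+m+2 := fun hh => hv₀f (hh ▸ hq)
    have hv₀p : v₀ ≠ r+m+3 := fun hh => hv₀f (hh ▸ hp)
    have hv₀d : v₀ ≤ r+m+1 ∨ v₀ ≤ r := by omega
    by_cases hc1 : v₀ ≤ r
    · exact lowcase he hz (r+m+2) hq (by omega) (by omega) hc1
    · by_cases hcl : ∃ c ∈ f, c ≤ r
      · obtain ⟨c, hcf, hcr⟩ := hcl
        refine finish v₀ u₀ hv₀g hv₀f hu₀f hu₀v ?_
        refine buildCA c v₀ (mem_ie.2 (Or.inr ⟨hcf, by omega⟩)) hcr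
          (mem_ie.2 (Or.inl rfl)) (by omega) (by omega) ?_ ?_
        · exact fun hc => (mem_ie.1 hc).elim (fun hh => by omega) (fun hh => he hh.1)
        · exact fun hc => (mem_ie.1 hc).elim (fun hh => by omega) (fun hh => hz hh.1)
      · by_cases hsucc : v₀ + 1 ∈ f
        · by_cases hq1 : v₀ + 1 = r+m+2
          · refine finish v₀ (r+m+2) hv₀g hv₀f hq (by omega) ?_
            refine buildCC v₀ (r+m+3) (mem_ie.2 (Or.inl rfl)) (by omega) (by omega)
              ?_ (mem_ie.2 (Or.inr ⟨hp, by omega⟩)) (by omega) (by omega) ?_ ?_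
            · exact fun hc => (mem_ie.1 hc).elim (fun hh => by omega) (fun hh => hh.2 (by omega))
            · exact fun hc => (mem_ie.1 hc).elim (fun hh => by omega) (fun hh => he hh.1)
            · exact fun hc => (mem_ie.1 hc).elim (fun hh => by omega) (fun hh => hz hh.1)
          · refine finish v₀ (v₀+1) hv₀g hv₀f hsucc (by omega) ?_
            have hsb := fbd _ hsucc
            have hs3 : v₀ + 1 ≠ r+m+3 := by omega
            refine buildCB (mem_ie.2 (Or.inr ⟨hq, by omega⟩))
              (mem_ie.2 (Or.inr ⟨hp, by omega⟩)) ?_ ?_ ?_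
            · exact fun hc => (mem_ie.1 hc).elim (fun hh => by omega) (fun hh => hd hh.1)
            · exact fun hc => (mem_ie.1 hc).elim (fun hh => by omega) (fun hh => he hh.1)
            · exact fun hc => (mem_ie.1 hc).elim (fun hh => by omega) (fun hh => hz hh.1)
        · have hvq : v₀ ≠ r+m+1 := by
            intro hh
            exact hsucc (by rw [hh, show r+m+1+1 = r+m+2 by omega]; exact hq)
          refine finish v₀ (r+m+3) hv₀g hv₀f hp (by omega) ?_
          refine buildCC v₀ (r+m+2) (mem_ie.2 (Or.inl rfl)) (by omega) (by omega)
            ?_ (mem_ie.2 (Or.inr ⟨hq, by omega⟩)) (by omega) (by omega) ?_ ?_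
          · exact fun hc => (mem_ie.1 hc).elim (fun hh => by omega) (fun hh => hsucc hh.1)
          · exact fun hc => (mem_ie.1 hc).elim (fun hh => by omega) (fun hh => he hh.1)
          · exact fun hc => (mem_ie.1 hc).elim (fun hh => by omega) (fun hh => hz hh.1)
  -- ═══════════ Branch CC : xb gap, yb target, e,z ∉ f ═══════════
  · have hu₀d : u₀ ≤ r+m+4 := by
      have h5 : u₀ ≠ r+m+5 := fun hh => he (hh ▸ hu₀f)
      have h6 : u₀ ≠ r+m+6 := fun hh => hz (hh ▸ hu₀f)
      omega
    by_cases hc1 : v₀ ≤ r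
    · exact lowcase he hz yb hybf (by omega) hyb2 hc1
    · by_cases hcl : ∃ c ∈ f, c ≤ r
      · obtain ⟨c, hcf, hcr⟩ := hcl
        refine finish v₀ u₀ hv₀g hv₀f hu₀f hu₀v ?_
        refine buildCA c v₀ (mem_ie.2 (Or.inr ⟨hcf, by omega⟩)) hcr
          (mem_ie.2 (Or.inl rfl)) (by omega) (by omega) ?_ ?_
        · exact fun hc => (mem_ie.1 hc).elim (fun hh => by omega) (fun hh => he hh.1)
        · exact fun hc => (mem_ie.1 hc).elim (fun hh => by omega) (fun hh => hz hh.1)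
      · by_cases hvx : xb + 2 ≤ v₀
        · -- (i) remove max f
          have hfne : f.Nonempty := ⟨u₀, hu₀f⟩
          set M := f.max' hfne with hMdef
          have hMf : M ∈ f := f.max'_mem hfne
          have hMu : u₀ ≤ M := f.le_max' u₀ hu₀f
          refine finish v₀ M hv₀g hv₀f hMf (by omega) ?_
          refine buildCC xb v₀ (mem_ie.2 (Or.inr ⟨hxbf, by omega⟩)) hxb1 hxb2
            ?_ (mem_ie.2 (Or.inl rfl)) (by omega) (by omega) ?_ ?_
          · exact fun hc => (mem_ie.1 hc).elim (fun hh => by omega) (fun hh => hxb3 hh.1)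
          · exact fun hc => (mem_ie.1 hc).elim (fun hh => by omega) (fun hh => he hh.1)
          · exact fun hc => (mem_ie.1 hc).elim (fun hh => by omega) (fun hh => hz hh.1)
        · by_cases hvx2 : v₀ = xb + 1
          · by_cases hvq : v₀ ≤ r+m+1
            · -- (ii-a)
              by_cases hsucc : v₀ + 1 ∈ f
              · by_cases hyy : ∃ w ∈ f, v₀ + 2 ≤ w ∧ w ≤ r+m+4
                · obtain ⟨w, hwf, hw1, hw2⟩ := hyy
                  refine finish v₀ (v₀+1) hv₀g hv₀f hsucc (by omega) ?_
                  refine buildCC v₀ w (mem_ie.2 (Or.inl rfl)) (by omega) hvq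
                    ?_ (mem_ie.2 (Or.inr ⟨hwf, by omega⟩)) hw1 hw2 ?_ ?_
                  · exact fun hc => (mem_ie.1 hc).elim (fun hh => by omega) (fun hh => hh.2 (by omega))
                  · exact fun hc => (mem_ie.1 hc).elim (fun hh => by omega) (fun hh => he hh.1)
                  · exact fun hc => (mem_ie.1 hc).elim (fun hh => by omega) (fun hh => hz hh.1)
                · -- unique element above v₀ is v₀+1 : f' = g
                  have huniq : ∀ l ∈ f, v₀ < l → l = v₀ + 1 := by
                    intro l hl hlt
                    have hlb := fbd l hl
                    have hl5 : l ≠ r+m+5 := fun hh => he (hh ▸ hl)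
                    have hl6 : l ≠ r+m+6 := fun hh => hz (hh ▸ hl)
                    by_contra hne
                    exact hyy ⟨l, hl, by omega, by omega⟩
                  have hcount := count_lemma (hfcard.trans hgcard.symm) hv₀g hv₀f hsucc
                    (by omega) agree huniq
                  have hfe : f.erase (v₀+1) = f.filter (fun x => x < v₀) := by
                    ext a
                    simp only [mem_erase, mem_filter]
                    constructor
                    · rintro ⟨hne, haf⟩
                      refine ⟨haf, ?_⟩
                      have hane : a ≠ v₀ := fun hh => hv₀f (hh ▸ haf)
                      by_contra hcon
                      exact hne (huniq a haf (by omega))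
                    · rintro ⟨haf, hlt⟩
                      exact ⟨by omega, haf⟩
                  refine ⟨v₀, v₀+1, hv₀g, hv₀f, hsucc, by omega, ?_⟩
                  rw [show insert v₀ (f.erase (v₀+1)) = g by rw [hfe, ← hcount]]
                  exact hg
              · by_cases htwo : ∃ a ∈ f, ∃ b ∈ f, v₀ < a ∧ v₀ < b ∧ a ≠ b
                · obtain ⟨a, ha, b, hb, ha1, hb1, hab⟩ := htwo
                  have hab' : ∀ w, w ∈ f → v₀ < w → v₀ + 2 ≤ w ∧ w ≤ r+m+4 := by
                    intro w hw hw1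
                    have hwb := fbd w hw
                    have hw5 : w ≠ r+m+5 := fun hh => he (hh ▸ hw)
                    have hw6 : w ≠ r+m+6 := fun hh => hz (hh ▸ hw)
                    have hwsucc : w ≠ v₀ + 1 := fun hh => hsucc (hh ▸ hw)
                    omega
                  rcases le_or_gt a b with hle | hlt
                  · have hb' := hab' a ha ha1
                    refine finish v₀ b hv₀g hv₀f hb (by omega) ?_
                    refine buildCC v₀ a (mem_ie.2 (Or.inl rfl)) (by omega) hvq
                      ?_ (mem_ie.2 (Or.inr ⟨ha, by omega⟩)) hb'.1 hb'.2 ?_ ?_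
                    · exact fun hc => (mem_ie.1 hc).elim (fun hh => by omega)
                        (fun hh => hsucc hh.1)
                    · exact fun hc => (mem_ie.1 hc).elim (fun hh => by omega) (fun hh => he hh.1)
                    · exact fun hc => (mem_ie.1 hc).elim (fun hh => by omega) (fun hh => hz hh.1)
                  · have hb' := hab' b hb hb1
                    refine finish v₀ a hv₀g hv₀f ha (by omega) ?_
                    refine buildCC v₀ b (mem_ie.2 (Or.inl rfl)) (by omega) hvq
                      ?_ (mem_ie.2 (Or.inr ⟨hb, by omega⟩)) hb'.1 hb'.2 ?_ ?_
                    · exact fun hc => (mem_ie.1 hc).elim (fun hh => by omega)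
                        (fun hh => hsucc hh.1)
                    · exact fun hc => (mem_ie.1 hc).elim (fun hh => by omega) (fun hh => he hh.1)
                    · exact fun hc => (mem_ie.1 hc).elim (fun hh => by omega) (fun hh => hz hh.1)
                · -- unique element above : f' = g
                  have huniq : ∀ l ∈ f, v₀ < l → l = u₀ := by
                    intro l hl hlt
                    by_contra hne
                    exact htwo ⟨l, hl, u₀, hu₀f, hlt, hu₀v, hne⟩
                  have hcount := count_lemma (hfcard.trans hgcard.symm) hv₀g hv₀f hu₀f
                    hu₀v agree huniq
                  have hfe : f.erase u₀ = f.filter (fun x => x < v₀) := by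
                    ext a
                    simp only [mem_erase, mem_filter]
                    constructor
                    · rintro ⟨hne, haf⟩
                      refine ⟨haf, ?_⟩
                      have hane : a ≠ v₀ := fun hh => hv₀f (hh ▸ haf)
                      by_contra hcon
                      exact hne (huniq a haf (by omega))
                    · rintro ⟨haf, hlt⟩
                      refine ⟨fun hh => ?_, haf⟩
                      omega
                  refine ⟨v₀, u₀, hv₀g, hv₀f, hu₀f, hu₀v, ?_⟩
                  rw [show insert v₀ (f.erase u₀) = g by rw [hfe, ← hcount]]
                  exact hg
            · -- (ii-b) v₀ = r+m+2
              have hv₀q : v₀ = r+m+2 := by omega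
              by_cases hpd : r+m+3 ∈ f ∧ r+m+4 ∈ f
              · refine finish v₀ (r+m+4) hv₀g hv₀f hpd.2 (by omega) ?_
                refine buildCB (mem_ie.2 (Or.inl hv₀q.symm))
                  (mem_ie.2 (Or.inr ⟨hpd.1, by omega⟩)) ?_ ?_ ?_
                · exact fun hc => (mem_ie.1 hc).elim (fun hh => by omega) (fun hh => hh.2 (by omega))
                · exact fun hc => (mem_ie.1 hc).elim (fun hh => by omega) (fun hh => he hh.1)
                · exact fun hc => (mem_ie.1 hc).elim (fun hh => by omega) (fun hh => hz hh.1)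
              · -- unique element above v₀, transfer gap of g
                have huniq : ∀ l ∈ f, v₀ < l → l = u₀ := by
                  intro l hl hlt
                  have hlb := fbd l hl
                  have hl5 : l ≠ r+m+5 := fun hh => he (hh ▸ hl)
                  have hl6 : l ≠ r+m+6 := fun hh => hz (hh ▸ hl)
                  have hl34 : l = r+m+3 ∨ l = r+m+4 := by omega
                  have hu34 : u₀ = r+m+3 ∨ u₀ = r+m+4 := by omega
                  by_contra hne
                  rcases hl34 with hh | hh <;> rcases hu34 with hh' | hh'
                  · omega
                  · exact hpd ⟨hh ▸ hl, hh' ▸ hu₀f⟩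
                  · exact hpd ⟨hh' ▸ hu₀f, hh ▸ hl⟩
                  · omega
                have hcount := count_lemma (hfcard.trans hgcard.symm) hv₀g hv₀f hu₀f
                  hu₀v agree huniq
                have hgmem : ∀ a, a ∈ g ↔ (a = v₀ ∨ (a ∈ f ∧ a < v₀)) := by
                  intro a
                  rw [hcount]
                  simp only [mem_insert, mem_filter]
                rcases hgC with ⟨-, hh, -⟩ | ⟨-, -, hh, -⟩ | ⟨⟨c, hcg, hcr⟩, -⟩ |
                  ⟨-, hh, -⟩ | ⟨⟨x', hx'g, hx'1, hx'2, hx'3, y', hy'g, hy'1, hy'2⟩, -, -⟩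
                · exfalso; rcases (hgmem _).1 hh with hh2 | ⟨hh2, hh3⟩
                  · omega
                  · exact hz hh2
                · exfalso; rcases (hgmem _).1 hh with hh2 | ⟨hh2, hh3⟩
                  · omega
                  · exact he hh2
                · exfalso; rcases (hgmem _).1 hcg with hh2 | ⟨hh2, hh3⟩
                  · omega
                  · exact hcl ⟨c, hh2, hcr⟩
                · exfalso; rcases (hgmem _).1 hh with hh2 | ⟨hh2, hh3⟩
                  · omega
                  · omega
                · -- transfer (x', y') to f' = f - u₀ + v₀
                  have hx'f : x' ∈ f := by
                    rcases (hgmem _).1 hx'g with hh | ⟨hh, -⟩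
                    · omega
                    · exact hh
                  have hy'm : y' = v₀ ∨ (y' ∈ f ∧ y' < v₀) := (hgmem _).1 hy'g
                  refine finish v₀ u₀ hv₀g hv₀f hu₀f hu₀v ?_
                  refine buildCC x' y' (mem_ie.2 (Or.inr ⟨hx'f, by omega⟩)) hx'1 hx'2
                    ?_ ?_ hy'1 hy'2 ?_ ?_
                  · intro hc
                    rcases mem_ie.1 hc with hh | ⟨hh, hh2⟩
                    · exact hx'3 (hh ▸ hv₀g)
                    · have : x' + 1 < v₀ := by omega
                      exact hx'3 ((hgmem _).2 (Or.inr ⟨hh, this⟩))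
                  · rcases hy'm with hh | ⟨hh, hh2⟩
                    · exact mem_ie.2 (Or.inl hh)
                    · exact mem_ie.2 (Or.inr ⟨hh, by omega⟩)
                  · exact fun hc => (mem_ie.1 hc).elim (fun hh => by omega) (fun hh => he hh.1)
                  · exact fun hc => (mem_ie.1 hc).elim (fun hh => by omega) (fun hh => hz hh.1)
          · -- (iii) v₀ < xb : remove xb
            have hvlt : v₀ < xb := by
              have : v₀ ≠ xb := fun hh => hv₀f (hh ▸ hxbf)
              omega
            set f' := insert v₀ (f.erase xb) with hf'def
            have hvmem : v₀ ∈ f' := mem_ie.2 (Or.inl rfl)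
            have hxbf' : xb ∉ f' := by
              exact fun hc => (mem_ie.1 hc).elim (fun hh => by omega) (fun hh => hh.2 rfl)
            set S := f'.filter (fun w => r+1 ≤ w ∧ w ≤ xb) with hSdef
            have hSne : S.Nonempty := ⟨v₀, mem_filter.2 ⟨hvmem, by omega, by omega⟩⟩
            set x := S.max' hSne with hxdef
            have hxS : x ∈ S := S.max'_mem hSne
            have hxf' : x ∈ f' := (mem_filter.1 hxS).1
            have hxb : r+1 ≤ x ∧ x ≤ xb := (mem_filter.1 hxS).2
            have hxlt : x < xb := by
              have : x ≠ xb := fun hh => hxbf' (hh ▸ hxf')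
              omega
            have hxmax : ∀ w ∈ S, w ≤ x := fun w hw => S.le_max' w hw
            have hx1 : x + 1 ∉ f' := by
              intro hcc
              have hvS : v₀ ≤ x := hxmax v₀ (mem_filter.2 ⟨hvmem, by omega, by omega⟩)
              rcases mem_ie.1 hcc with hh | ⟨hh, hne⟩
              · omega
              · have := hxmax (x+1) (mem_filter.2 ⟨hcc, by omega, by omega⟩)
                omega
            refine finish v₀ xb hv₀g hv₀f hxbf hvlt ?_
            refine buildCC x yb hxf' hxb.1 (by omega) hx1
              (mem_ie.2 (Or.inr ⟨hybf, by omega⟩)) (by omega) hyb2 ?_ ?_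
            · exact fun hc => (mem_ie.1 hc).elim (fun hh => by omega) (fun hh => he hh.1)
            · exact fun hc => (mem_ie.1 hc).elim (fun hh => by omega) (fun hh => hz hh.1)

/-- For `n ≥ 6`, `r ≥ 0` and `2 ≤ k ≤ r+n-4` with `k ≠ n-4`, the
ideal `HS_k(I(CH_{n,r}ᶜ))` has linear quotients with respect to the lex order induced
by `x₁ > ⋯ > x_{r+n}`. -/
theorem CH_LQ (n r k : ℕ) (hn : 6 ≤ n) (hk1 : 2 ≤ k) (hk2 : k ≤ r + n - 4) (hk3 : k ≠ n - 4) :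
    ∀ L : List (Finset ℕ), L.Nodup →
      (∀ h, h ∈ L ↔ h ∈ hsGens (CHedge n r) (Finset.Icc 1 (r + n)) k) →
      List.Pairwise lexGt L → LQList L := by
  intro L _ hmem hsort i j hij
  have hfS : L.get j ∈ hsGens (CHedge n r) (Finset.Icc 1 (r + n)) k :=
    (hmem _).1 (L.get_mem _)
  have hgS : L.get i ∈ hsGens (CHedge n r) (Finset.Icc 1 (r + n)) k :=
    (hmem _).1 (L.get_mem _)
  have hfcard : (L.get j).card = k + 2 := hfS.2.1
  have hgcard : (L.get i).card = k + 2 := hgS.2.1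
  have hgf : lexGt (L.get i) (L.get j) := List.Pairwise.rel_get_of_lt hsort hij
  have hlex : List.Lex (· < ·) ((L.get i).sort (· ≤ ·)) ((L.get j).sort (· ≤ ·)) := hgf
  obtain ⟨v₀, hv₀g, hv₀f, agree₀⟩ := exists_of_lex _ _ hlex
    (Finset.sortedLT_sort _).pairwise (Finset.sortedLT_sort _).pairwise
    (by rw [Finset.length_sort, Finset.length_sort, hfcard, hgcard])
  rw [Finset.mem_sort] at hv₀g
  have hv₀f' : v₀ ∉ L.get j := fun hc => hv₀f ((Finset.mem_sort _).2 hc)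
  have agree : ∀ x, x < v₀ → (x ∈ L.get i ↔ x ∈ L.get j) := by
    intro x hx
    have := agree₀ x hx
    rw [Finset.mem_sort, Finset.mem_sort] at this
    exact this
  obtain ⟨v, u, hvg, hvf, huf, hvu, hf'S⟩ := exchange hn hk3 hfS hgS hv₀g hv₀f' agree
  have hf'L : insert v ((L.get j).erase u) ∈ L := (hmem _).2 hf'S
  obtain ⟨p, hp⟩ := List.mem_iff_get.1 hf'L
  have hvf'mem : v ∈ insert v ((L.get j).erase u) := Finset.mem_insert_self _ _
  have hpj : p < j := by
    rcases lt_trichotomy p j with hlt | heq | hgt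
    · exact hlt
    · exfalso
      rw [heq] at hp
      rw [← hp] at hvf'mem
      exact hvf hvf'mem
    · exfalso
      have h1 : lexGt (L.get j) (L.get p) := List.Pairwise.rel_get_of_lt hsort hgt
      rw [hp] at h1
      have h2 : lexGt (insert v ((L.get j).erase u)) (L.get j) := by
        apply lex_of_agree _ _ (Finset.sortedLT_sort _).pairwise (Finset.sortedLT_sort _).pairwise
        · rw [Finset.length_sort, Finset.length_sort, card_ie huf hvf, hfcard]
        · exact (Finset.mem_sort _).2 hvf'mem
        · exact fun hc => hvf ((Finset.mem_sort _).1 hc)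
        · intro x hx
          rw [Finset.mem_sort, Finset.mem_sort, mem_ie]
          constructor
          · rintro (rfl | ⟨hh, -⟩)
            · omega
            · exact hh
          · intro hh
            exact Or.inr ⟨hh, by omega⟩
      exact lex_asymm _ _ h2 h1
  refine ⟨p, hpj, v, ?_, Finset.mem_sdiff.2 ⟨hvg, hvf⟩⟩
  rw [hp]
  ext a
  simp only [Finset.mem_sdiff, Finset.mem_singleton, mem_ie]
  constructor
  · rintro ⟨rfl | ⟨haf, -⟩, hnf⟩
    · rfl
    · exact absurd haf hnf
  · rintro rfl
    exact ⟨Or.inl rfl, hvf⟩
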